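/- A finite simple graph G is an optimized graph if and only if G is a proper interval graph. -/

import Mathlib

variable {V : Type*}

/-- A proper interval graph: each vertex gets a closed real interval, distinct vertices
are adjacent iff their intervals intersect, and no interval properly contains another. -/
def IsProperIntervalGraph (G : SimpleGraph V) : Prop :=
  ∃ a b : V → ℝ, (∀ u, a u ≤ b u) ∧
    (∀ u v : V, u ≠ v →
      (G.Adj u v ↔ (Set.Icc (a u) (b u) ∩ Set.Icc (a v) (b v)).Nonempty)) ∧
    ∀ u v : V, u ≠ v → ¬(a u ≤ a v ∧ b v ≤ b u ∧ ¬(a u = a v ∧ b u = b v))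

/-- An optimized graph: vertices can be injectively labeled by reals so that from any
vertex, every neighbor is strictly closer (in label distance) than every non-neighbor
(other than the vertex itself). -/
def IsOptimizedGraph (G : SimpleGraph V) : Prop :=
  ∃ f : V → ℝ, Function.Injective f ∧
    ∀ u v w : V, G.Adj u v → w ≠ u → ¬ G.Adj u w → |f u - f v| < |f u - f w|

open scoped Classical

variable {n : ℕ}

def Umb (G : SimpleGraph V) (e : Fin n ≃ V) : Prop :=
  ∀ i j k : Fin n, i < j → j < k → G.Adj (e i) (e k) →
    G.Adj (e i) (e j) ∧ G.Adj (e j) (e k)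

noncomputable def nbrS (G : SimpleGraph V) (e : Fin n ≃ V) (i : Fin n) : Finset (Fin n) :=
  insert i (Finset.univ.filter fun k => G.Adj (e i) (e k))

lemma nbrS_nonempty (G : SimpleGraph V) (e : Fin n ≃ V) (i : Fin n) :
    (nbrS G e i).Nonempty := ⟨i, Finset.mem_insert_self _ _⟩

noncomputable def rmax (G : SimpleGraph V) (e : Fin n ≃ V) (i : Fin n) : Fin n :=
  (nbrS G e i).max' (nbrS_nonempty G e i)

lemma le_rmax_self (G : SimpleGraph V) (e : Fin n ≃ V) (i : Fin n) : i ≤ rmax G e i :=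
  Finset.le_max' _ _ (Finset.mem_insert_self _ _)

lemma le_rmax_of_adj {G : SimpleGraph V} {e : Fin n ≃ V} {i k : Fin n}
    (h : G.Adj (e i) (e k)) : k ≤ rmax G e i :=
  Finset.le_max' _ _ (Finset.mem_insert_of_mem (by simp [h]))

lemma rmax_spec (G : SimpleGraph V) (e : Fin n ≃ V) (i : Fin n) :
    rmax G e i = i ∨ G.Adj (e i) (e (rmax G e i)) := by
  have := (nbrS G e i).max'_mem (nbrS_nonempty G e i)
  unfold nbrS at this
  rw [Finset.mem_insert] at this
  rcases this with h | h
  · exact Or.inl h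
  · exact Or.inr (by simp at h; exact h)

lemma adj_of_le_rmax {G : SimpleGraph V} {e : Fin n ≃ V} (hu : Umb G e) {i j : Fin n}
    (hij : i < j) (hj : j ≤ rmax G e i) : G.Adj (e i) (e j) := by
  rcases rmax_spec G e i with h | h
  · rw [h] at hj; exact absurd (lt_of_lt_of_le hij hj) (lt_irrefl _)
  · rcases eq_or_lt_of_le hj with h' | h'
    · exact h' ▸ h
    · exact (hu i j _ hij h' h).1

lemma adj_iff_le_rmax {G : SimpleGraph V} {e : Fin n ≃ V} (hu : Umb G e) {i j : Fin n}
    (hij : i < j) : G.Adj (e i) (e j) ↔ j ≤ rmax G e i :=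
  ⟨le_rmax_of_adj, adj_of_le_rmax hu hij⟩

lemma rmax_mono {G : SimpleGraph V} {e : Fin n ≃ V} (hu : Umb G e) {i j : Fin n}
    (hij : i < j) : rmax G e i ≤ rmax G e j := by
  by_cases h : rmax G e i ≤ j
  · exact h.trans (le_rmax_self G e j)
  · push_neg at h
    rcases rmax_spec G e i with h' | h'
    · rw [h'] at h; exact absurd (hij.trans h) (lt_irrefl _)
    · exact le_rmax_of_adj (hu i j _ hij h h').2

noncomputable def qf (R : ℕ → ℕ) (hR : ∀ m, m ≤ R m) (j : ℕ) : ℕ :=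
  Nat.find (⟨j, hR j⟩ : ∃ i, j ≤ R i)

lemma qf_le (R : ℕ → ℕ) (hR : ∀ m, m ≤ R m) (j : ℕ) : qf R hR j ≤ j :=
  Nat.find_le (hR j)

lemma le_R_qf (R : ℕ → ℕ) (hR : ∀ m, m ≤ R m) (j : ℕ) : j ≤ R (qf R hR j) :=
  Nat.find_spec (⟨j, hR j⟩ : ∃ i, j ≤ R i)

lemma qf_min {R : ℕ → ℕ} {hR : ∀ m, m ≤ R m} {j i : ℕ} (h : i < qf R hR j) :
    ¬ j ≤ R i := by
  unfold qf at h
  exact Nat.find_min (⟨j, hR j⟩ : ∃ i, j ≤ R i) h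

noncomputable def gf (R : ℕ → ℕ) (hR : ∀ m, m ≤ R m) : ℕ → ℝ
  | 0 => 0
  | (j+1) =>
    if h : qf R hR (j+1) < j + 1 then
      (max (gf R hR j)
        (if qf R hR (j+1) = 0 then gf R hR j else gf R hR (qf R hR (j+1) - 1) + 1)
        + (gf R hR (qf R hR (j+1)) + 1)) / 2
    else gf R hR j + 2
  termination_by j => j
  decreasing_by all_goals omega
lemma gf_inv (R : ℕ → ℕ) (hR : ∀ m, m ≤ R m) (hmono : Monotone R) : ∀ j : ℕ,
    (∀ i, i < j → gf R hR i < gf R hR j) ∧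
      (∀ i, i < j → ((j ≤ R i → gf R hR j < gf R hR i + 1) ∧
        (R i < j → gf R hR i + 1 ≤ gf R hR j))) := by
  intro j
  induction j using Nat.strong_induction_on with
  | _ j IH =>
    match j with
    | 0 =>
      exact ⟨fun i hi => absurd hi (Nat.not_lt_zero i),
             fun i hi => absurd hi (Nat.not_lt_zero i)⟩
    | (j+1) =>
      have mle : ∀ i m : ℕ, i ≤ m → m ≤ j → gf R hR i ≤ gf R hR m := by
        intro i m him hmj
        rcases eq_or_lt_of_le him with rfl | h
        · exact le_rfl
        · exact le_of_lt ((IH m (Nat.lt_succ_of_le hmj)).1 i h)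
      by_cases hq : qf R hR (j+1) < j + 1
      · have hqj : qf R hR (j+1) ≤ j := Nat.lt_succ_iff.mp hq
        have hRq : j + 1 ≤ R (qf R hR (j+1)) := le_R_qf R hR (j+1)
        have h1 : gf R hR j < gf R hR (qf R hR (j+1)) + 1 := by
          rcases eq_or_lt_of_le hqj with heq | h
          · rw [heq]; linarith
          · exact ((IH j (Nat.lt_succ_self j)).2 (qf R hR (j+1)) h).1 (by omega)
        have hL : max (gf R hR j)
            (if qf R hR (j+1) = 0 then gf R hR j else gf R hR (qf R hR (j+1) - 1) + 1)
            < gf R hR (qf R hR (j+1)) + 1 := by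
          have h2 : (if qf R hR (j+1) = 0 then gf R hR j
              else gf R hR (qf R hR (j+1) - 1) + 1) < gf R hR (qf R hR (j+1)) + 1 := by
            split
            · exact h1
            · have : gf R hR (qf R hR (j+1) - 1) < gf R hR (qf R hR (j+1)) :=
                (IH (qf R hR (j+1)) (by omega)).1 (qf R hR (j+1) - 1) (by omega)
              linarith
          exact max_lt h1 h2
        have heq : gf R hR (j+1) = (max (gf R hR j)
            (if qf R hR (j+1) = 0 then gf R hR j else gf R hR (qf R hR (j+1) - 1) + 1)
            + (gf R hR (qf R hR (j+1)) + 1)) / 2 := by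
          rw [gf, dif_pos hq]
        have hgtL : max (gf R hR j)
            (if qf R hR (j+1) = 0 then gf R hR j else gf R hR (qf R hR (j+1) - 1) + 1)
            < gf R hR (j+1) := by rw [heq]; linarith
        have hltU : gf R hR (j+1) < gf R hR (qf R hR (j+1)) + 1 := by
          rw [heq]; linarith
        constructor
        · intro i hi
          have h3 : gf R hR i ≤ gf R hR j := mle i j (by omega) le_rfl
          have h4 : gf R hR j ≤ max (gf R hR j)
            (if qf R hR (j+1) = 0 then gf R hR j else gf R hR (qf R hR (j+1) - 1) + 1) :=
            le_max_left _ _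
          linarith
        · intro i hi
          constructor
          · intro hji
            have hqi : qf R hR (j+1) ≤ i := by
              by_contra hc
              push_neg at hc
              exact (qf_min hc) hji
            have : gf R hR (qf R hR (j+1)) ≤ gf R hR i := mle _ i hqi (by omega)
            linarith
          · intro hij
            have hiq : i < qf R hR (j+1) := by
              by_contra hc
              push_neg at hc
              have := hmono hc
              omega
            have hq0 : ¬ (qf R hR (j+1) = 0) := by omega
            have h5 : gf R hR i ≤ gf R hR (qf R hR (j+1) - 1) :=
              mle i _ (by omega) (by omega)
            have h6 : gf R hR (qf R hR (j+1) - 1) + 1 ≤ max (gf R hR j)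
                (if qf R hR (j+1) = 0 then gf R hR j
                 else gf R hR (qf R hR (j+1) - 1) + 1) := by
              rw [if_neg hq0]; exact le_max_right _ _
            linarith
      · have heq : gf R hR (j+1) = gf R hR j + 2 := by rw [gf, dif_neg hq]
        constructor
        · intro i hi
          have := mle i j (by omega) le_rfl
          linarith
        · intro i hi
          constructor
          · intro hji
            exfalso
            have hlt : i < qf R hR (j+1) := by
              have := qf_le R hR (j+1); omega
            exact (qf_min hlt) hji
          · intro _
            have := mle i j (by omega) le_rfl
            linarith

theorem optimized_of_umb {G : SimpleGraph V} (e : Fin n ≃ V) (hu : Umb G e) :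
    IsOptimizedGraph G := by
  classical
  set R : ℕ → ℕ := fun m => if h : m < n then ((rmax G e ⟨m, h⟩ : Fin n) : ℕ) else m with hRdef
  have hRge : ∀ m, m ≤ R m := by
    intro m
    simp only [hRdef]
    split
    · exact Fin.le_def.mp (le_rmax_self G e ⟨m, by assumption⟩)
    · exact le_rfl
  have hRmono : Monotone R := by
    intro x y hxy
    rcases eq_or_lt_of_le hxy with rfl | hlt
    · exact le_rfl
    simp only [hRdef]
    by_cases hx : x < n
    · by_cases hy : y < n
      · rw [dif_pos hx, dif_pos hy]
        exact Fin.le_def.mp (rmax_mono hu (show (⟨x, hx⟩ : Fin n) < ⟨y, hy⟩ from hlt))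
      · rw [dif_pos hx, dif_neg hy]
        have := (rmax G e ⟨x, hx⟩).is_lt
        omega
    · have hy : ¬ y < n := by omega
      rw [dif_neg hx, dif_neg hy]
      exact hxy
  have hadjR : ∀ i j : Fin n, i < j → (G.Adj (e i) (e j) ↔ (j : ℕ) ≤ R (i : ℕ)) := by
    intro i j hij
    simp only [hRdef, dif_pos i.is_lt, Fin.eta]
    rw [adj_iff_le_rmax hu hij, Fin.le_def]
  have inv := gf_inv R hRge hRmono
  have hsm : StrictMono (gf R hRge) := fun p q hpq => (inv q).1 p hpq
  have key1 : ∀ x y : V, G.Adj x y →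
      |gf R hRge ((e.symm x : Fin n) : ℕ) - gf R hRge ((e.symm y : Fin n) : ℕ)| < 1 := by
    intro x y hxy
    set i := (e.symm x : Fin n)
    set j := (e.symm y : Fin n)
    have hadj' : G.Adj (e i) (e j) := by
      rwa [e.apply_symm_apply, e.apply_symm_apply]
    have hne : i ≠ j := fun h => (G.ne_of_adj hadj') (congrArg e h)
    rcases lt_or_gt_of_ne hne with h | h
    · have hR1 : (j : ℕ) ≤ R (i : ℕ) := (hadjR i j h).mp hadj'
      have h1 : gf R hRge (j : ℕ) < gf R hRge (i : ℕ) + 1 :=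
        ((inv (j : ℕ)).2 (i : ℕ) (by exact_mod_cast h)).1 hR1
      have h2 : gf R hRge (i : ℕ) < gf R hRge (j : ℕ) := hsm (by exact_mod_cast h)
      rw [abs_sub_lt_iff]
      constructor <;> linarith
    · have hR1 : (i : ℕ) ≤ R (j : ℕ) := (hadjR j i h).mp hadj'.symm
      have h1 : gf R hRge (i : ℕ) < gf R hRge (j : ℕ) + 1 :=
        ((inv (i : ℕ)).2 (j : ℕ) (by exact_mod_cast h)).1 hR1
      have h2 : gf R hRge (j : ℕ) < gf R hRge (i : ℕ) := hsm (by exact_mod_cast h)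
      rw [abs_sub_lt_iff]
      constructor <;> linarith
  have key2 : ∀ x y : V, x ≠ y → ¬ G.Adj x y →
      1 ≤ |gf R hRge ((e.symm x : Fin n) : ℕ) - gf R hRge ((e.symm y : Fin n) : ℕ)| := by
    intro x y hxy hnadj
    set i := (e.symm x : Fin n)
    set j := (e.symm y : Fin n)
    have hnadj' : ¬ G.Adj (e i) (e j) := by
      rwa [e.apply_symm_apply, e.apply_symm_apply]
    have hne : i ≠ j := fun h => hxy (e.symm.injective h)
    rcases lt_or_gt_of_ne hne with h | h
    · have hR1 : R (i : ℕ) < (j : ℕ) := by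
        by_contra hc
        push_neg at hc
        exact hnadj' ((hadjR i j h).mpr hc)
      have h1 : gf R hRge (i : ℕ) + 1 ≤ gf R hRge (j : ℕ) :=
        ((inv (j : ℕ)).2 (i : ℕ) (by exact_mod_cast h)).2 hR1
      rw [abs_sub_comm, le_abs]
      left; linarith
    · have hR1 : R (j : ℕ) < (i : ℕ) := by
        by_contra hc
        push_neg at hc
        exact hnadj' (((hadjR j i h).mpr hc).symm)
      have h1 : gf R hRge (j : ℕ) + 1 ≤ gf R hRge (i : ℕ) :=
        ((inv (i : ℕ)).2 (j : ℕ) (by exact_mod_cast h)).2 hR1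
      rw [le_abs]
      left; linarith
  refine ⟨fun u => gf R hRge ((e.symm u : Fin n) : ℕ), ?_, ?_⟩
  · intro x y hxy
    have := hsm.injective hxy
    have : (e.symm x : Fin n) = e.symm y := Fin.val_injective this
    simpa using congrArg e this
  · intro u v w huv hwu hnadj
    have h1 := key1 u v huv
    have h2 := key2 u w (fun h => hwu h.symm) hnadj
    exact h1.trans_le h2

theorem properInterval_of_umb {G : SimpleGraph V} (e : Fin n ≃ V) (hu : Umb G e) :
    IsProperIntervalGraph G := by
  classical
  set af : Fin n → ℝ := fun i => ((i : ℕ) : ℝ) with haf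
  set bf : Fin n → ℝ := fun i => ((rmax G e i : ℕ) : ℝ) + ((i : ℕ) : ℝ) / (n : ℝ) with hbf
  have hdivlt : ∀ i : Fin n, ((i : ℕ) : ℝ) / (n : ℝ) < 1 := by
    intro i
    rw [div_lt_one (by exact_mod_cast i.pos)]
    exact_mod_cast i.is_lt
  have hdivnn : ∀ i : Fin n, (0 : ℝ) ≤ ((i : ℕ) : ℝ) / (n : ℝ) := by
    intro i; positivity
  have hab : ∀ i, af i ≤ bf i := by
    intro i
    have h1 : (i : ℕ) ≤ (rmax G e i : ℕ) := le_rmax_self G e i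
    have h2 : ((i : ℕ) : ℝ) ≤ ((rmax G e i : ℕ) : ℝ) := by exact_mod_cast h1
    have := hdivnn i
    simp only [haf, hbf]
    linarith
  have hbmono : ∀ i j : Fin n, i < j → bf i < bf j := by
    intro i j hij
    have h1 : (rmax G e i : ℕ) ≤ (rmax G e j : ℕ) := rmax_mono hu hij
    have h2 : ((rmax G e i : ℕ) : ℝ) ≤ ((rmax G e j : ℕ) : ℝ) := by exact_mod_cast h1
    have h3 : ((i : ℕ) : ℝ) / (n : ℝ) < ((j : ℕ) : ℝ) / (n : ℝ) := by
      apply div_lt_div_of_pos_right ?_ ?_ <;> try exact_mod_cast hij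
      exact_mod_cast i.pos
    simp only [hbf]
    linarith
  have key : ∀ i j : Fin n, i < j →
      (G.Adj (e i) (e j) ↔ (Set.Icc (af i) (bf i) ∩ Set.Icc (af j) (bf j)).Nonempty) := by
    intro i j hij
    rw [Set.Icc_inter_Icc, Set.nonempty_Icc, adj_iff_le_rmax hu hij]
    have hmax : af i ⊔ af j = af j := by
      apply sup_eq_right.mpr
      simp only [haf]
      exact_mod_cast hij.le
    rw [hmax, le_inf_iff]
    constructor
    · intro hj
      refine ⟨?_, hab j⟩
      have h1 : ((j : ℕ) : ℝ) ≤ ((rmax G e i : ℕ) : ℝ) := by exact_mod_cast hj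
      have := hdivnn i
      simp only [haf, hbf]
      linarith
    · rintro ⟨h1, -⟩
      by_contra hc
      push_neg at hc
      have h2 : ((rmax G e i : ℕ) : ℝ) + 1 ≤ ((j : ℕ) : ℝ) := by
        have : (rmax G e i : ℕ) < (j : ℕ) := hc
        exact_mod_cast this
      have h3 := hdivlt i
      simp only [haf, hbf] at h1
      linarith
  refine ⟨fun u => af (e.symm u), fun u => bf (e.symm u), fun u => hab _, ?_, ?_⟩
  · intro u v huv
    have hne : e.symm u ≠ e.symm v := fun h => huv (by
      have := congrArg e h
      simpa using this)
    rcases lt_or_gt_of_ne hne with h | h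
    · have := key _ _ h
      rwa [e.apply_symm_apply, e.apply_symm_apply] at this
    · have := key _ _ h
      rw [e.apply_symm_apply, e.apply_symm_apply, G.adj_comm, Set.inter_comm] at this
      exact this
  · intro u v huv
    rintro ⟨h1, h2, -⟩
    have hne : e.symm u ≠ e.symm v := fun h => huv (by
      have := congrArg e h
      simpa using this)
    have hlt : e.symm u < e.symm v := by
      simp only [haf] at h1
      have hle : ((e.symm u : Fin n) : ℕ) ≤ ((e.symm v : Fin n) : ℕ) := by exact_mod_cast h1
      have : (e.symm u : Fin n) ≤ e.symm v := by
        rw [Fin.le_def]; exact hle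
      exact lt_of_le_of_ne this hne
    exact absurd (h2.trans_lt (hbmono _ _ hlt)) (lt_irrefl _)

lemma umb_of_optimized [Fintype V] {G : SimpleGraph V} (h : IsOptimizedGraph G) :
    ∃ e : Fin (Fintype.card V) ≃ V, Umb G e := by
  obtain ⟨f, hf, hopt⟩ := h
  letI : LinearOrder V := LinearOrder.lift' f hf
  let e := monoEquivOfFin V rfl
  have hmono : ∀ i j : Fin (Fintype.card V), i < j → f (e i) < f (e j) := by
    intro i j hij
    exact (OrderIso.lt_iff_lt e).mpr hij
  refine ⟨e.toEquiv, ?_⟩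
  intro i j k hij hjk hadj
  have h1 := hmono i j hij
  have h2 := hmono j k hjk
  constructor
  · by_contra hc
    have hne : (e j : V) ≠ e i := fun h => (ne_of_lt h1) (congrArg f h).symm
    have := hopt (e i) (e k) (e j) hadj hne hc
    rw [abs_of_nonpos (by linarith), abs_of_nonpos (by linarith)] at this
    linarith
  · by_contra hc
    have hne : (e j : V) ≠ e k := fun h => (ne_of_lt h2) (congrArg f h)
    have hc' : ¬ G.Adj (e k) (e j) := fun h => hc h.symm
    have := hopt (e k) (e i) (e j) hadj.symm hne hc'
    rw [abs_of_nonneg (by linarith), abs_of_nonneg (by linarith)] at this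
    linarith

lemma umb_of_properInterval [Fintype V] {G : SimpleGraph V} (h : IsProperIntervalGraph G) :
    ∃ e : Fin (Fintype.card V) ≃ V, Umb G e := by
  obtain ⟨a, b, hab, hadj, hcon⟩ := h
  have hbmono : ∀ u v : V, u ≠ v → a u ≤ a v → b u ≤ b v := by
    intro u v hne hle
    by_contra hc
    push_neg at hc
    exact hcon u v hne ⟨hle, hc.le, fun hh => absurd hh.2 (ne_of_gt hc)⟩
  have hkey : Function.Injective (fun u : V => toLex (a u, ((Fintype.equivFin V) u : ℕ))) := by
    intro x y hxy
    have h1 := toLex.injective hxy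
    have h2 : ((Fintype.equivFin V) x : ℕ) = ((Fintype.equivFin V) y : ℕ) :=
      congrArg Prod.snd h1
    exact (Fintype.equivFin V).injective (Fin.val_injective h2)
  letI : LinearOrder V := LinearOrder.lift' _ hkey
  let e := monoEquivOfFin V rfl
  have hamono : ∀ i j : Fin (Fintype.card V), i ≤ j → a (e i) ≤ a (e j) := by
    intro i j hij
    have h1 : (e i : V) ≤ e j := (OrderIso.le_iff_le e).mpr hij
    exact Prod.Lex.monotone_fst _ _ h1
  refine ⟨e.toEquiv, ?_⟩
  intro i j k hij hjk hadjik
  have hne_ij : (e i : V) ≠ e j := fun h => (ne_of_lt hij) (e.injective h)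
  have hne_jk : (e j : V) ≠ e k := fun h => (ne_of_lt hjk) (e.injective h)
  have hne_ik : (e i : V) ≠ e k := fun h => (ne_of_lt (hij.trans hjk)) (e.injective h)
  have hadjik' : G.Adj (e i) (e k) := hadjik
  have hik : a (e k) ≤ b (e i) := by
    obtain ⟨x, hx1, hx2⟩ := (hadj (e i) (e k) hne_ik).mp hadjik'
    rw [Set.mem_Icc] at hx1 hx2
    exact le_trans hx2.1 hx1.2
  constructor
  · show G.Adj (e i) (e j)
    rw [hadj (e i) (e j) hne_ij]
    refine ⟨a (e j), ?_, ?_⟩ <;> rw [Set.mem_Icc]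
    · exact ⟨hamono i j hij.le, le_trans (hamono j k hjk.le) hik⟩
    · exact ⟨le_rfl, hab _⟩
  · show G.Adj (e j) (e k)
    rw [hadj (e j) (e k) hne_jk]
    refine ⟨a (e k), ?_, ?_⟩ <;> rw [Set.mem_Icc]
    · exact ⟨hamono j k hjk.le, le_trans hik (hbmono _ _ hne_ij (hamono i j hij.le))⟩
    · exact ⟨le_rfl, hab _⟩

/-- A finite simple graph is an optimized graph iff it is a proper interval graph. -/
theorem optimizedGraph_iff_properInterval [Fintype V] (G : SimpleGraph V) :
    IsOptimizedGraph G ↔ IsProperIntervalGraph G := by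
  constructor
  · intro h
    obtain ⟨e, he⟩ := umb_of_optimized h
    exact properInterval_of_umb e he
  · intro h
    obtain ⟨e, he⟩ := umb_of_properInterval h
    exact optimized_of_umb e he
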